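/- arXiv:2509.20848 — 4 statements merged into one kernel-verified Lean document; each statement's English description precedes it below -/
import Mathlib

section
/- Let X be a finite set, let C be a nonempty finite family of functions from X to {0,1}, and let f : X → {0,1}. Then there exists a subset Q ⊆ X with |Q| ≤ |C| − 1 such that any two functions g₁, g₂ ∈ C that both agree with f at every point of Q agree with each other at every point of X. -/
/-- Contender subroutine (Claim 2.1): given a nonempty finite family `C` of candidate
labelings of a finite set `X` and a target labeling `f`, there is a query set `Q ⊆ X` of
size at most `|C| - 1` such that any two candidates agreeing with `f` on all of `Q`
agree with each other on all of `X`. -/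
theorem stmt_3 {α : Type*} [DecidableEq α] (X : Finset α) (C : Finset (α → Bool))
    (hC : C.Nonempty) (f : α → Bool) :
    ∃ Q : Finset α, Q ⊆ X ∧ Q.card ≤ C.card - 1 ∧
      ∀ g₁ ∈ C, ∀ g₂ ∈ C, (∀ q ∈ Q, g₁ q = f q) → (∀ q ∈ Q, g₂ q = f q) →
        ∀ x ∈ X, g₁ x = g₂ x := by
  clear hC
  induction C using Finset.strongInduction with
  | _ C IH =>
    by_cases h : ∀ g₁ ∈ C, ∀ g₂ ∈ C, ∀ x ∈ X, g₁ x = g₂ x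
    · exact ⟨∅, Finset.empty_subset _, Nat.zero_le _,
        fun g₁ h₁ g₂ h₂ _ _ x hx => h g₁ h₁ g₂ h₂ x hx⟩
    · push_neg at h
      obtain ⟨g₁, hg₁, g₂, hg₂, x, hx, hne⟩ := h
      obtain ⟨g, hg, hgx⟩ : ∃ g ∈ C, g x ≠ f x := by
        by_cases h1 : g₁ x = f x
        · exact ⟨g₂, hg₂, fun h2 => hne (h1.trans h2.symm)⟩
        · exact ⟨g₁, hg₁, h1⟩
      set C' := C.filter (fun h => h x = f x) with hC'
      have hsub : C' ⊂ C := by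
        refine (Finset.ssubset_iff_of_subset (Finset.filter_subset _ _)).mpr ⟨g, hg, ?_⟩
        simp [hC', hgx]
      obtain ⟨Q', hQ'X, hQ'card, hQ'⟩ := IH C' hsub
      refine ⟨insert x Q', Finset.insert_subset hx hQ'X, ?_, ?_⟩
      · have h2 : 2 ≤ C.card := Finset.one_lt_card.mpr
          ⟨g₁, hg₁, g₂, hg₂, fun e => hne (by rw [e])⟩
        have := Finset.card_lt_card hsub
        have := Finset.card_insert_le x Q'
        omega
      · intro a ha b hb haf hbf y hy
        have hax : a x = f x := haf x (Finset.mem_insert_self _ _)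
        have hbx : b x = f x := hbf x (Finset.mem_insert_self _ _)
        exact hQ' a (Finset.mem_filter.mpr ⟨ha, hax⟩) b (Finset.mem_filter.mpr ⟨hb, hbx⟩)
          (fun q hq => haf q (Finset.mem_insert_of_mem hq))
          (fun q hq => hbf q (Finset.mem_insert_of_mem hq)) y hy
end

section
/- For every d ≥ 1 there exist points x_1, …, x_{2d} ∈ ℝ^d and decision stumps h_0, h_1, …, h_{2d} : ℝ^d → {0,1} such that for all i, j ∈ {1,…,2d}: h_i(x_j) ≠ h_0(x_j) if and only if i = j. In other words, the star number of the class of decision stumps over ℝ^d is at least 2d. -/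
/-- The decision stump `f_{i,t} : ℝ^d → {0,1}`, equal to `1` iff `x_i ≥ t`. -/
noncomputable def stump (d : ℕ) (i : Fin d) (t : ℝ) : (Fin d → ℝ) → Bool :=
  fun x => decide (t ≤ x i)

/-- A function is a decision stump if it equals `f_{i,t}` for some coordinate `i` and
threshold `t`. -/
def IsStump {d : ℕ} (h : (Fin d → ℝ) → Bool) : Prop :=
  ∃ (i : Fin d) (t : ℝ), h = stump d i t

/-- The star number of the class of decision stumps over `ℝ^d` is at least `2d`:
there are points `x_1, …, x_{2d}` and stumps `h_0, h_1, …, h_{2d}` such that `h_i`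
disagrees with `h_0` at `x_j` exactly when `i = j`. -/
theorem stmt_4 (d : ℕ) (hd : 1 ≤ d) :
    ∃ (x : Fin (2 * d) → (Fin d → ℝ)) (h0 : (Fin d → ℝ) → Bool)
      (h : Fin (2 * d) → (Fin d → ℝ) → Bool),
      IsStump h0 ∧ (∀ i, IsStump (h i)) ∧
        ∀ i j : Fin (2 * d), (h i (x j) ≠ h0 (x j) ↔ i = j) := by
  set c : Fin (2 * d) → Fin d := fun j =>
    ⟨if (j : ℕ) < d then (j : ℕ) else (j : ℕ) - d, by
      have := j.isLt; split <;> omega⟩ with hc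
  refine ⟨fun j k =>
      if k = c j then (if (j : ℕ) < d then -(1/2 : ℝ) else 1/2)
      else (if (j : ℕ) < d then -2 else 2),
    stump d ⟨0, hd⟩ 0,
    fun j => stump d (c j) (if (j : ℕ) < d then -1 else 1),
    ⟨_, _, rfl⟩, fun j => ⟨_, _, rfl⟩, ?_⟩
  intro i j
  have hi2 := i.isLt
  have hj2 := j.isLt
  simp only [stump, hc]
  have hij : i = j ↔ (i : ℕ) = (j : ℕ) := Fin.ext_iff
  by_cases hj : (j : ℕ) < d <;> by_cases hi : (i : ℕ) < d <;>
    by_cases hcc : (⟨if (i : ℕ) < d then (i : ℕ) else (i : ℕ) - d, by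
        have := i.isLt; split <;> omega⟩ : Fin d) =
      (⟨if (j : ℕ) < d then (j : ℕ) else (j : ℕ) - d, by
        have := j.isLt; split <;> omega⟩ : Fin d) <;>
    by_cases h0j : (⟨0, hd⟩ : Fin d) =
      (⟨if (j : ℕ) < d then (j : ℕ) else (j : ℕ) - d, by
        have := j.isLt; split <;> omega⟩ : Fin d) <;>
    rw [Fin.mk.injEq] at hcc h0j <;>
    simp only [Fin.mk.injEq, hj, hi, ite_true, ite_false] at hcc h0j ⊢ <;>
    simp only [Fin.mk.injEq, hcc, h0j, hij, ite_true, ite_false] <;>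
    norm_num <;>
    omega
end

section
/- Let s ∈ ℕ, let x_1, …, x_s ∈ ℝ^d, and let h_0, h_1, …, h_s : ℝ^d → {0,1} be decision stumps such that for all i, j ∈ {1,…,s}: h_i(x_j) ≠ h_0(x_j) if and only if i = j. Then s ≤ 2d. In other words, the star number of the class of decision stumps over ℝ^d is at most 2d. -/
lemma key_pair (t1 t2 v1 v2 : ℝ)
    (h12 : decide (t2 ≤ v1) ≠ decide (t1 ≤ v1))
    (h21 : decide (t1 ≤ v2) ≠ decide (t2 ≤ v2))
    (hb : decide (t1 ≤ v1) = decide (t2 ≤ v2)) : False := by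
  by_cases H1 : t1 ≤ v1 <;> by_cases H2 : t2 ≤ v2 <;>
    simp [H1, H2] at h12 h21 hb <;> linarith

/-- The star number of the class of decision stumps over `ℝ^d` is at most `2d`:
if points `x_1, …, x_s` and stumps `h_0, h_1, …, h_s` satisfy that `h_i` disagrees
with `h_0` at `x_j` exactly when `i = j`, then `s ≤ 2d`. -/
theorem stmt_5 (d s : ℕ) (x : Fin s → (Fin d → ℝ)) (h0 : (Fin d → ℝ) → Bool)
    (h : Fin s → (Fin d → ℝ) → Bool)
    (hh0 : IsStump h0) (hh : ∀ i, IsStump (h i))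
    (hstar : ∀ i j : Fin s, (h i (x j) ≠ h0 (x j) ↔ i = j)) :
    s ≤ 2 * d := by
  choose ι τ hheq using hh
  -- key pairwise disagreement for distinct indices with same coordinate
  have hpair : ∀ j k : Fin s, j ≠ k → ι j = ι k →
      decide (τ j ≤ x k (ι k)) ≠ decide (τ k ≤ x k (ι k)) := by
    intro j k hjk hι
    have h1 : h j (x k) = h0 (x k) := by
      by_contra hc
      exact hjk ((hstar j k).mp hc)
    have h2 : h k (x k) ≠ h0 (x k) := (hstar k k).mpr rfl
    have : h j (x k) ≠ h k (x k) := by rw [h1]; exact fun e => h2 e.symm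
    simpa [hheq, stump, hι] using this
  -- each coordinate fiber has at most 2 elements
  have hfiber : ∀ a ∈ Finset.univ.image ι,
      (Finset.univ.filter (fun j => ι j = a)).card ≤ 2 := by
    intro a _
    by_contra hc
    push_neg at hc
    obtain ⟨j1, hj1, j2, hj2, j3, hj3, h12, h13, h23⟩ :=
      Finset.two_lt_card.mp hc
    simp only [Finset.mem_filter, Finset.mem_univ, true_and] at hj1 hj2 hj3
    -- pigeonhole on the boolean values at own point
    set b : Fin s → Bool := fun k => decide (τ k ≤ x k (ι k)) with hb
    have key : ∀ j k : Fin s, j ≠ k → ι j = a → ι k = a → b j = b k → False := by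
      intro j k hjk hja hka hbjk
      have hι : ι j = ι k := hja.trans hka.symm
      have A := hpair j k hjk hι
      have B := hpair k j hjk.symm hι.symm
      rw [hι] at B
      have hbjk' : decide (τ j ≤ x j (ι k)) = decide (τ k ≤ x k (ι k)) := by
        simpa [hb, hι] using hbjk
      exact key_pair (τ j) (τ k) (x j (ι k)) (x k (ι k)) B A hbjk'
    rcases Bool.eq_false_or_eq_true (b j1) with hb1 | hb1 <;>
      rcases Bool.eq_false_or_eq_true (b j2) with hb2 | hb2 <;>
      rcases Bool.eq_false_or_eq_true (b j3) with hb3 | hb3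
    · exact key j1 j2 h12 hj1 hj2 (hb1.trans hb2.symm)
    · exact key j1 j2 h12 hj1 hj2 (hb1.trans hb2.symm)
    · exact key j1 j3 h13 hj1 hj3 (hb1.trans hb3.symm)
    · exact key j2 j3 h23 hj2 hj3 (hb2.trans hb3.symm)
    · exact key j2 j3 h23 hj2 hj3 (hb2.trans hb3.symm)
    · exact key j1 j3 h13 hj1 hj3 (hb1.trans hb3.symm)
    · exact key j1 j2 h12 hj1 hj2 (hb1.trans hb2.symm)
    · exact key j1 j2 h12 hj1 hj2 (hb1.trans hb2.symm)
  calc s = (Finset.univ : Finset (Fin s)).card := by simp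
    _ ≤ 2 * ((Finset.univ : Finset (Fin s)).image ι).card :=
        Finset.card_le_mul_card_image _ 2 hfiber
    _ ≤ 2 * d := by
        have := Finset.card_le_univ ((Finset.univ : Finset (Fin s)).image ι)
        simp only [Finset.card_univ, Fintype.card_fin] at this
        omega
end

section
/- Let n ≥ 1 and let g : {1,…,n} → {0,1} be such that for every monotone h : {1,…,n} → {0,1}, the number of points k with g(k) ≠ h(k) is at least εn, where ε > 0. Let s ≥ 2 and draw indices j_1, …, j_s independently and uniformly at random from {1,…,n}. Then the probability that there exist a, b ∈ {1,…,s} with j_a < j_b, g(j_a) = 1 and g(j_b) = 0 is at least (1 − e^{−εs/2})². -/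
lemma core_ineq (θ : ℝ) (h0 : 0 ≤ θ) (h1 : θ ≤ 1) (s : ℕ) (hs : 2 ≤ s) :
    (1 - θ) ^ (s - 1) * (1 + ((s : ℝ) - 1) * θ) + (1 - Real.exp (-θ * s / 2)) ^ 2 ≤ 1 := by
  have hs2 : (2 : ℝ) ≤ (s : ℝ) := by exact_mod_cast hs
  set x : ℝ := 1 - θ with hxdef
  have hx0 : 0 ≤ x := by simp [hxdef]; linarith
  have hxe : x ≤ Real.exp (-θ) := by
    have := Real.add_one_le_exp (-θ); simp [hxdef]; linarith
  set c : ℝ := Real.exp (-θ * s / 2) with hc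
  have hc0 : 0 < c := Real.exp_pos _
  have hc1 : c ≤ 1 := by
    rw [hc, ← Real.exp_zero]
    apply Real.exp_le_exp.mpr
    nlinarith
  set B : ℝ := x ^ ((s : ℝ) / 2) with hB
  have hB0 : 0 ≤ B := Real.rpow_nonneg hx0 _
  have hexp_rpow : ∀ a b : ℝ, (Real.exp a) ^ b = Real.exp (a * b) := by
    intro a b
    rw [Real.rpow_def_of_pos (Real.exp_pos a), Real.log_exp]
  have hBc : B ≤ c := by
    calc B ≤ (Real.exp (-θ)) ^ ((s : ℝ) / 2) :=
          Real.rpow_le_rpow hx0 hxe (by positivity)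
      _ = c := by rw [hexp_rpow, hc]; ring_nf
  have hBsq : B ^ 2 = x ^ s := by
    calc B ^ 2 = B ^ ((2 : ℕ) : ℝ) := (Real.rpow_natCast B 2).symm
      _ = x ^ ((s : ℝ) / 2 * 2) := by rw [hB, ← Real.rpow_mul hx0]; norm_num
      _ = x ^ ((s : ℕ) : ℝ) := by norm_num
      _ = x ^ s := Real.rpow_natCast x s
  have hxs : x ^ (s - 1) * x = x ^ s := by
    rw [← pow_succ]; congr 1; omega
  -- key1
  have key1 : x ^ (s - 1) * (2 + ((s : ℝ) - 2) * θ) ≤ 2 * B := by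
    rcases eq_or_lt_of_le hx0 with hx | hx
    · have hs1 : s - 1 ≠ 0 := by omega
      rw [← hx, zero_pow hs1, zero_mul]
      positivity
    · set k : ℝ := ((s : ℝ) - 2) / 2 with hk
      have hk0 : 0 ≤ k := by rw [hk]; linarith
      have e2 : (x : ℝ) ^ (s - 1) = x ^ (((s : ℝ) - 1)) := by
        rw [← Real.rpow_natCast x (s - 1)]
        congr 1
        have : ((s - 1 : ℕ) : ℝ) = (s : ℝ) - 1 := by
          have h1s : 1 ≤ s := by omega
          push_cast [Nat.cast_sub h1s]; ring
        rw [this]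
      have e1 : x ^ (((s : ℝ) - 1)) = B * x ^ k := by
        rw [hB, hk, ← Real.rpow_add hx]; congr 1; ring
      have e3 : x ^ k ≤ Real.exp (-(θ * k)) := by
        calc x ^ k ≤ (Real.exp (-θ)) ^ k := Real.rpow_le_rpow hx0 hxe hk0
          _ = Real.exp (-(θ * k)) := by rw [hexp_rpow]; ring_nf
      have e4 : 1 + k * θ ≤ Real.exp (θ * k) := by
        have := Real.add_one_le_exp (θ * k); linarith
      have e5 : x ^ k * (1 + k * θ) ≤ 1 := by
        have hkθ : (0:ℝ) ≤ 1 + k * θ := by nlinarith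
        calc x ^ k * (1 + k * θ) ≤ Real.exp (-(θ * k)) * Real.exp (θ * k) :=
              mul_le_mul e3 e4 hkθ (Real.exp_nonneg _)
          _ = 1 := by rw [← Real.exp_add]; simp
      have heq : x ^ (s - 1) * (2 + ((s : ℝ) - 2) * θ) = (2 * B) * (x ^ k * (1 + k * θ)) := by
        rw [e2, e1, hk]; ring
      rw [heq]
      calc (2 * B) * (x ^ k * (1 + k * θ)) ≤ (2 * B) * 1 := by
            apply mul_le_mul_of_nonneg_left e5 (by positivity)
        _ = 2 * B := by ring
  -- key2
  have key2 : x ^ (s - 1) * (1 + ((s : ℝ) - 1) * θ) ≤ 2 * B - B ^ 2 := by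
    have heq : x ^ (s - 1) * (1 + ((s : ℝ) - 1) * θ)
        = x ^ (s - 1) * (2 + ((s : ℝ) - 2) * θ) - x ^ s := by
      rw [← hxs, hxdef]; ring
    rw [heq, ← hBsq]; linarith
  nlinarith [key2, hBc, hc1, hB0, hc0]


def cnt {n : ℕ} (g : Fin n → Bool) (A : Finset (Fin n)) (t : ℕ) : Finset (Fin n) :=
  A.filter (fun k => (g k = true ∧ (k : ℕ) < t) ∨ (g k = false ∧ t ≤ (k : ℕ)))

lemma matching_aux {n : ℕ} (g : Fin n → Bool) :
    ∀ (m : ℕ) (A : Finset (Fin n)),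
      (∀ t : ℕ, m ≤ (cnt g A t).card) →
      ∃ I J : Fin m → Fin n, StrictMono I ∧ StrictMono J ∧
        (∀ a, I a ∈ A) ∧ (∀ a, J a ∈ A) ∧
        (∀ a, g (I a) = true) ∧ (∀ a, g (J a) = false) ∧ (∀ a, I a < J a) := by
  intro m
  induction m with
  | zero =>
    intro A _
    exact ⟨Fin.elim0, Fin.elim0, fun a => a.elim0, fun a => a.elim0, fun a => a.elim0,
      fun a => a.elim0, fun a => a.elim0, fun a => a.elim0, fun a => a.elim0⟩
  | succ m ih =>
    intro A hA
    -- the ones of A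
    have h1 : (A.filter (fun k => g k = true)).Nonempty := by
      have hcard := hA (n + 1)
      have hsub : cnt g A (n + 1) ⊆ A.filter (fun k => g k = true) := by
        intro k hk
        simp only [cnt, Finset.mem_filter] at hk ⊢
        obtain ⟨hkA, hk2⟩ := hk
        rcases hk2 with ⟨h, -⟩ | ⟨-, h⟩
        · exact ⟨hkA, h⟩
        · exact absurd h (by have := k.isLt; omega)
      have : 0 < (A.filter (fun k => g k = true)).card :=
        lt_of_lt_of_le (Nat.succ_pos m) (le_trans hcard (Finset.card_le_card hsub))
      exact Finset.card_pos.mp this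
    set p := (A.filter (fun k => g k = true)).min' h1 with hp
    have hpmem : p ∈ A.filter (fun k => g k = true) := Finset.min'_mem _ h1
    have hpA : p ∈ A := (Finset.mem_filter.mp hpmem).1
    have hgp : g p = true := (Finset.mem_filter.mp hpmem).2
    have hple : ∀ k ∈ A, g k = true → p ≤ k := by
      intro k hk hgk
      exact Finset.min'_le _ _ (Finset.mem_filter.mpr ⟨hk, hgk⟩)
    -- zeros above p
    set A2 := A.filter (fun k => g k = false ∧ (p : ℕ) < (k : ℕ)) with hA2
    have h2sub : cnt g A (p : ℕ) ⊆ A2 := by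
      intro k hk
      simp only [cnt, Finset.mem_filter] at hk
      obtain ⟨hkA, hk2⟩ := hk
      rcases hk2 with ⟨hgk, hlt⟩ | ⟨hgk, hle⟩
      · exfalso
        have := hple k hkA hgk
        have : (p : ℕ) ≤ (k : ℕ) := this
        omega
      · refine Finset.mem_filter.mpr ⟨hkA, hgk, ?_⟩
        rcases lt_or_eq_of_le hle with h | h
        · exact h
        · exfalso
          have : k = p := Fin.ext h.symm
          rw [this] at hgk; rw [hgp] at hgk; simp at hgk
    have h2card : m + 1 ≤ A2.card := le_trans (hA (p : ℕ)) (Finset.card_le_card h2sub)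
    have h2 : A2.Nonempty := Finset.card_pos.mp (by omega)
    set q := A2.min' h2 with hq
    have hqmem : q ∈ A2 := Finset.min'_mem _ h2
    have hqA : q ∈ A := (Finset.mem_filter.mp hqmem).1
    have hgq : g q = false := (Finset.mem_filter.mp hqmem).2.1
    have hpq : (p : ℕ) < (q : ℕ) := (Finset.mem_filter.mp hqmem).2.2
    have hqle : ∀ k ∈ A, g k = false → (p : ℕ) < (k : ℕ) → q ≤ k := by
      intro k hk h1' h2'
      exact Finset.min'_le _ _ (Finset.mem_filter.mpr ⟨hk, h1', h2'⟩)
    -- recursion set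
    set A' := (A.erase p).erase q with hA'
    have hA'filter : ∀ t, cnt g A' t = ((cnt g A t).erase p).erase q := by
      intro t
      ext k
      simp only [cnt, hA', Finset.mem_filter, Finset.mem_erase]
      tauto
    have key : ∀ t : ℕ, m ≤ (cnt g A' t).card := by
      intro t
      rcases le_or_gt t (p : ℕ) with h | h
      · -- p not in cnt g A t
        have hpnot : p ∉ cnt g A t := by
          simp only [cnt, Finset.mem_filter]
          rintro ⟨-, ⟨-, hlt⟩ | ⟨hgf, -⟩⟩
          · omega
          · rw [hgp] at hgf; simp at hgf
        rw [hA'filter, Finset.erase_eq_of_notMem hpnot]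
        have := Finset.pred_card_le_card_erase (s := cnt g A t) (a := q)
        have := hA t
        omega
      · rcases le_or_gt t (q : ℕ) with h' | h'
        · -- middle case : card (cnt g A t) ≥ m + 2
          have hsub2 : cnt g A (p : ℕ) ⊆ cnt g A t := by
            intro k hk
            have hk2 := h2sub hk
            simp only [hA2, Finset.mem_filter] at hk2
            obtain ⟨hkA, hgk, hpk⟩ := hk2
            have hqk : (q : ℕ) ≤ (k : ℕ) := hqle k hkA hgk hpk
            simp only [cnt, Finset.mem_filter]
            exact ⟨hkA, Or.inr ⟨hgk, by omega⟩⟩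
          have hpmem2 : p ∈ cnt g A t := by
            simp only [cnt, Finset.mem_filter]
            exact ⟨hpA, Or.inl ⟨hgp, h⟩⟩
          have hpnot2 : p ∉ cnt g A (p : ℕ) := by
            simp only [cnt, Finset.mem_filter]
            rintro ⟨-, ⟨-, hlt⟩ | ⟨hgf, -⟩⟩
            · omega
            · rw [hgp] at hgf; simp at hgf
          have hins : insert p (cnt g A (p : ℕ)) ⊆ cnt g A t :=
            Finset.insert_subset hpmem2 hsub2
          have hc1 : m + 2 ≤ (cnt g A t).card := by
            have := Finset.card_le_card hins
            rw [Finset.card_insert_of_notMem hpnot2] at this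
            have := hA (p : ℕ)
            omega
          rw [hA'filter]
          have e1 := Finset.pred_card_le_card_erase (s := cnt g A t) (a := p)
          have e2 := Finset.pred_card_le_card_erase (s := (cnt g A t).erase p) (a := q)
          omega
        · -- q not in cnt g A t
          have hqnot : q ∉ cnt g A t := by
            simp only [cnt, Finset.mem_filter]
            rintro ⟨-, ⟨hgt, -⟩ | ⟨-, hle⟩⟩
            · rw [hgq] at hgt; simp at hgt
            · omega
          rw [hA'filter]
          have hqnot' : q ∉ (cnt g A t).erase p := fun hmem => hqnot (Finset.mem_of_mem_erase hmem)
          rw [Finset.erase_eq_of_notMem hqnot']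
          have := Finset.pred_card_le_card_erase (s := cnt g A t) (a := p)
          have := hA t
          omega
    obtain ⟨I', J', hI'm, hJ'm, hI'A, hJ'A, hgI', hgJ', hIJ'⟩ := ih A' key
    have hI'A0 : ∀ a, I' a ∈ A := fun a =>
      Finset.mem_of_mem_erase (Finset.mem_of_mem_erase (hI'A a))
    have hJ'A0 : ∀ a, J' a ∈ A := fun a =>
      Finset.mem_of_mem_erase (Finset.mem_of_mem_erase (hJ'A a))
    have hpI' : ∀ a, p < I' a := by
      intro a
      have hne : I' a ≠ p := (Finset.mem_erase.mp (Finset.mem_of_mem_erase (hI'A a))).1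
      exact lt_of_le_of_ne (hple _ (hI'A0 a) (hgI' a)) (Ne.symm hne)
    have hqJ' : ∀ a, q < J' a := by
      intro a
      have hne : J' a ≠ q := (Finset.mem_erase.mp (hJ'A a)).1
      have hpJ : (p : ℕ) < (J' a : ℕ) := by
        have h1' : p ≤ I' a := hple _ (hI'A0 a) (hgI' a)
        have h2' : I' a < J' a := hIJ' a
        have := lt_of_le_of_lt h1' h2'
        exact this
      exact lt_of_le_of_ne (hqle _ (hJ'A0 a) (hgJ' a) hpJ) (Ne.symm hne)
    refine ⟨Fin.cons p I', Fin.cons q J', ?_, ?_, ?_, ?_, ?_, ?_, ?_⟩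
    · -- StrictMono (Fin.cons p I')
      intro a b hab
      rcases Fin.eq_zero_or_eq_succ b with rfl | ⟨b', rfl⟩
      · exact absurd hab (Fin.not_lt_zero _)
      · rcases Fin.eq_zero_or_eq_succ a with rfl | ⟨a', rfl⟩
        · simpa using hpI' b'
        · simpa using hI'm (Fin.succ_lt_succ_iff.mp hab)
    · intro a b hab
      rcases Fin.eq_zero_or_eq_succ b with rfl | ⟨b', rfl⟩
      · exact absurd hab (Fin.not_lt_zero _)
      · rcases Fin.eq_zero_or_eq_succ a with rfl | ⟨a', rfl⟩
        · simpa using hqJ' b'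
        · simpa using hJ'm (Fin.succ_lt_succ_iff.mp hab)
    · intro a
      rcases Fin.eq_zero_or_eq_succ a with rfl | ⟨a', rfl⟩ <;> simp [hpA, hI'A0]
    · intro a
      rcases Fin.eq_zero_or_eq_succ a with rfl | ⟨a', rfl⟩ <;> simp [hqA, hJ'A0]
    · intro a
      rcases Fin.eq_zero_or_eq_succ a with rfl | ⟨a', rfl⟩ <;> simp [hgp, hgI']
    · intro a
      rcases Fin.eq_zero_or_eq_succ a with rfl | ⟨a', rfl⟩ <;> simp [hgq, hgJ']
    · intro a
      rcases Fin.eq_zero_or_eq_succ a with rfl | ⟨a', rfl⟩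
      · simpa using Fin.lt_def.mpr hpq
      · simpa using hIJ' a'


/-- Monotonicity testing (Lemma 16 of Dodis et al.): if `g : {1,…,n} → {0,1}` (encoded on
`Fin n`) is at distance at least `ε n` from every monotone function, then `s ≥ 2` indices
drawn i.i.d. uniformly from `{1,…,n}` reveal a violation of monotonicity (a pair `j_a < j_b`
with `g(j_a) = 1` and `g(j_b) = 0`) with probability at least `(1 − e^{−εs/2})²`. -/
theorem stmt_10 (n s : ℕ) (hn : 1 ≤ n) (hs : 2 ≤ s) (ε : ℝ) (hε : 0 < ε)
    (g : Fin n → Bool)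
    (hfar : ∀ h : Fin n → Bool, Monotone h →
      ε * n ≤ Nat.card {k : Fin n // g k ≠ h k}) :
    (1 - Real.exp (-(ε * s) / 2)) ^ 2 ≤
      (Nat.card {j : Fin s → Fin n //
          ∃ a b : Fin s, j a < j b ∧ g (j a) = true ∧ g (j b) = false} : ℝ) / n ^ s := by
  classical
  have hn0 : (0 : ℝ) < (n : ℝ) := by exact_mod_cast hn
  set D := ⌈ε * (n : ℝ)⌉₊ with hDdef
  have hεn : (0 : ℝ) < ε * n := by positivity
  have hD1 : 1 ≤ D := Nat.one_le_iff_ne_zero.mpr (by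
    have := Nat.ceil_pos.mpr hεn; omega)
  -- ε n ≤ n
  have htriv : ε * (n : ℝ) ≤ (n : ℝ) := by
    have h := hfar (fun _ => true) monotone_const
    have hle : Nat.card {k : Fin n // g k ≠ true} ≤ n := by
      rw [Nat.card_eq_fintype_card]
      simpa using Fintype.card_subtype_le (fun k : Fin n => g k ≠ true)
    calc ε * (n : ℝ) ≤ (Nat.card {k : Fin n // g k ≠ true} : ℝ) := h
      _ ≤ (n : ℝ) := by exact_mod_cast hle
  have hDn : D ≤ n := Nat.ceil_le.mpr (by exact_mod_cast htriv)
  have hεD : ε * (n : ℝ) ≤ (D : ℝ) := Nat.le_ceil _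
  -- matching hypothesis from hfar
  have hcnt : ∀ t : ℕ, D ≤ (cnt g Finset.univ t).card := by
    intro t
    have hmono : Monotone (fun k : Fin n => decide (t ≤ (k : ℕ))) := by
      intro k k' hkk'
      rcases le_or_gt t (k : ℕ) with h | h
      · have h' : t ≤ (k' : ℕ) := le_trans h hkk'
        simp [h, h']
      · simp [Nat.not_le.mpr h]
    have hf := hfar _ hmono
    have hcard : Nat.card {k : Fin n // g k ≠ decide (t ≤ (k : ℕ))}
        = (cnt g Finset.univ t).card := by
      rw [Nat.card_eq_fintype_card, Fintype.card_subtype]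
      congr 1
      ext k
      simp only [cnt, Finset.mem_filter, Finset.mem_univ, true_and]
      rcases le_or_gt t (k : ℕ) with h | h <;> cases hgk : g k <;>
        simp [h, hgk, Nat.not_le.mpr, Nat.lt_iff_add_one_le] <;> omega
    rw [hcard] at hf
    exact Nat.ceil_le.mpr hf
  obtain ⟨I, J, hImono, hJmono, hIA, hJA, hgI, hgJ, hIJ⟩ :=
    matching_aux g D Finset.univ hcnt
  have hIinj : Function.Injective I := hImono.injective
  have hJinj : Function.Injective J := hJmono.injective
  -- counting setup
  set P : (Fin s → Fin n) → Prop :=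
    fun j => ∃ a b : Fin s, j a < j b ∧ g (j a) = true ∧ g (j b) = false with hPdef
  have hNcard : Nat.card {j : Fin s → Fin n // P j} = (Finset.univ.filter P).card := by
    rw [Nat.card_eq_fintype_card, Fintype.card_subtype]
  set RI : Finset (Fin n) := Finset.univ.image I with hRI
  set Va : Fin D → Finset (Fin n) :=
    fun a => (Finset.Iio a).image I ∪ (Finset.Ici a).image J with hVa
  have hVaD : ∀ a, (Va a).card = D := by
    intro a
    rw [hVa]
    rw [Finset.card_union_of_disjoint]
    · rw [Finset.card_image_of_injective _ hIinj, Finset.card_image_of_injective _ hJinj,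
        Fin.card_Iio, Fin.card_Ici]
      have := a.isLt; omega
    · rw [Finset.disjoint_left]
      intro x hx hx'
      obtain ⟨a', -, rfl⟩ := Finset.mem_image.mp hx
      obtain ⟨b', -, hb⟩ := Finset.mem_image.mp hx'
      have h1 := hgI a'
      have h2 := hgJ b'
      rw [hb] at h2
      rw [h1] at h2
      exact Bool.noConfusion h2
  have hVacompl : ∀ a : Fin D, (Finset.univ \ Va a).card = n - D := by
    intro a
    rw [Finset.card_sdiff_of_subset (Finset.subset_univ _), hVaD]
    simp
  have hRIcard : RI.card = D := by
    rw [hRI, Finset.card_image_of_injective _ hIinj]; simp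
  have hRIcompl : (Finset.univ \ RI).card = n - D := by
    rw [Finset.card_sdiff_of_subset (Finset.subset_univ _), hRIcard]; simp
  set F0 : Finset (Fin s → Fin n) := Fintype.piFinset (fun _ => Finset.univ \ RI) with hF0
  set G : Fin D → Fin s → Finset (Fin s → Fin n) :=
    fun a u => Fintype.piFinset
      (fun v => if v = u then {I a} else Finset.univ \ Va a) with hG
  have hF0card : F0.card = (n - D) ^ s := by
    rw [hF0, Fintype.card_piFinset]
    simp [hRIcompl]
  have hGcard : ∀ a u, (G a u).card = (n - D) ^ (s - 1) := by
    intro a u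
    rw [hG, Fintype.card_piFinset]
    rw [← Finset.mul_prod_erase _ _ (Finset.mem_univ u)]
    simp only [if_pos rfl, Finset.card_singleton, one_mul]
    rw [Finset.prod_congr rfl (fun v hv => by
      rw [if_neg (Finset.ne_of_mem_erase hv)])]
    rw [Finset.prod_const, hVacompl, Finset.card_erase_of_mem (Finset.mem_univ u)]
    simp
  -- inclusion
  have hsub : Finset.univ.filter (fun j => ¬ P j) ⊆
      F0 ∪ Finset.univ.biUnion (fun a : Fin D =>
        Finset.univ.biUnion (fun u : Fin s => G a u)) := by
    intro j hj
    have hbad : ¬ P j := (Finset.mem_filter.mp hj).2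
    by_cases h0 : ∀ u : Fin s, ∀ a : Fin D, j u ≠ I a
    · apply Finset.mem_union_left
      rw [hF0, Fintype.mem_piFinset]
      intro v
      rw [Finset.mem_sdiff]
      refine ⟨Finset.mem_univ _, ?_⟩
      rw [hRI, Finset.mem_image]
      rintro ⟨a, -, ha⟩
      exact h0 v a ha.symm
    · push_neg at h0
      obtain ⟨u0, a0, hu0⟩ := h0
      set S : Finset (Fin D) := Finset.univ.filter (fun a => ∃ u, j u = I a) with hS
      have hSne : S.Nonempty := ⟨a0, Finset.mem_filter.mpr ⟨Finset.mem_univ _, u0, hu0⟩⟩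
      set a := S.min' hSne with ha
      obtain ⟨u, hju⟩ := (Finset.mem_filter.mp (Finset.min'_mem S hSne)).2
      apply Finset.mem_union_right
      rw [Finset.mem_biUnion]
      refine ⟨a, Finset.mem_univ _, ?_⟩
      rw [Finset.mem_biUnion]
      refine ⟨u, Finset.mem_univ _, ?_⟩
      rw [hG, Fintype.mem_piFinset]
      intro v
      by_cases hv : v = u
      · rw [if_pos hv, hv, Finset.mem_singleton]; exact hju
      · rw [if_neg hv, Finset.mem_sdiff]
        refine ⟨Finset.mem_univ _, ?_⟩
        rw [hVa, Finset.mem_union]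
        rintro (hmem | hmem)
        · obtain ⟨a', ha', hja'⟩ := Finset.mem_image.mp hmem
          rw [Finset.mem_Iio] at ha'
          have haS : a' ∈ S := Finset.mem_filter.mpr ⟨Finset.mem_univ _, v, hja'.symm⟩
          have := Finset.min'_le S a' haS
          rw [← ha] at this
          exact absurd ha' (not_lt.mpr this)
        · obtain ⟨b, hb, hjb⟩ := Finset.mem_image.mp hmem
          rw [Finset.mem_Ici] at hb
          apply hbad
          refine ⟨u, v, ?_, ?_, ?_⟩
          · rw [hju, ← hjb]
            exact lt_of_le_of_lt (hImono.monotone hb) (hIJ b)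
          · rw [hju]; exact hgI a
          · rw [← hjb]; exact hgJ b
  -- cardinality bound on the bad set
  have hBadCard : (Finset.univ.filter (fun j => ¬ P j)).card
      ≤ (n - D) ^ s + D * (s * (n - D) ^ (s - 1)) := by
    calc (Finset.univ.filter (fun j => ¬ P j)).card
        ≤ (F0 ∪ Finset.univ.biUnion (fun a : Fin D =>
            Finset.univ.biUnion (fun u : Fin s => G a u))).card :=
          Finset.card_le_card hsub
      _ ≤ F0.card + (Finset.univ.biUnion (fun a : Fin D =>
            Finset.univ.biUnion (fun u : Fin s => G a u))).card :=
          Finset.card_union_le _ _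
      _ ≤ (n - D) ^ s + D * (s * (n - D) ^ (s - 1)) := by
          rw [hF0card]
          gcongr
          calc (Finset.univ.biUnion (fun a : Fin D =>
                Finset.univ.biUnion (fun u : Fin s => G a u))).card
              ≤ ∑ a : Fin D, (Finset.univ.biUnion (fun u : Fin s => G a u)).card :=
                Finset.card_biUnion_le
            _ ≤ ∑ a : Fin D, (s * (n - D) ^ (s - 1)) := by
                apply Finset.sum_le_sum
                intro a _
                calc (Finset.univ.biUnion (fun u : Fin s => G a u)).card
                    ≤ ∑ u : Fin s, (G a u).card := Finset.card_biUnion_le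
                  _ = s * (n - D) ^ (s - 1) := by
                      simp [hGcard]
            _ = D * (s * (n - D) ^ (s - 1)) := by simp [mul_comm]
  have hsplit : (Finset.univ.filter P).card
      + (Finset.univ.filter (fun j => ¬ P j)).card = n ^ s := by
    rw [Finset.card_filter_add_card_filter_not]
    simp [Finset.card_univ]
  -- pass to the reals
  rw [hNcard, le_div_iff₀ (by positivity : (0 : ℝ) < (n : ℝ) ^ s)]
  set θ : ℝ := (D : ℝ) / (n : ℝ) with hθ
  have hθ0 : 0 ≤ θ := by positivity
  have hθ1 : θ ≤ 1 := by
    rw [hθ, div_le_one hn0]; exact_mod_cast hDn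
  have hεθ : ε ≤ θ := by
    rw [hθ, le_div_iff₀ hn0]; exact hεD
  have hcore := core_ineq θ hθ0 hθ1 s hs
  set c : ℝ := Real.exp (-θ * s / 2) with hc
  set E : ℝ := Real.exp (-(ε * s) / 2) with hE
  have hcE : c ≤ E := by
    rw [hc, hE]
    apply Real.exp_le_exp.mpr
    have hs0 : (0:ℝ) ≤ (s : ℝ) := by positivity
    nlinarith
  have hE1 : E ≤ 1 := by
    rw [hE, ← Real.exp_zero]
    apply Real.exp_le_exp.mpr
    have hs0 : (0:ℝ) ≤ (s : ℝ) := by positivity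
    nlinarith
  have hsqle : (1 - E) ^ 2 ≤ (1 - c) ^ 2 := by
    have h1 : 0 ≤ 1 - E := by linarith
    nlinarith
  -- cast the counting bound
  set M : ℝ := ((Finset.univ.filter P).card : ℝ) with hM
  have hMge : (n : ℝ) ^ s - (((n - D : ℕ)) : ℝ) ^ s
      - (D : ℝ) * ((s : ℝ) * (((n - D : ℕ)) : ℝ) ^ (s - 1)) ≤ M := by
    have h1 : ((Finset.univ.filter (fun j => ¬ P j)).card : ℝ)
        ≤ (((n - D : ℕ)) : ℝ) ^ s + (D : ℝ) * ((s : ℝ) * (((n - D : ℕ)) : ℝ) ^ (s - 1)) := by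
      exact_mod_cast hBadCard
    have h2 : M + ((Finset.univ.filter (fun j => ¬ P j)).card : ℝ) = (n : ℝ) ^ s := by
      rw [hM]; exact_mod_cast hsplit
    linarith
  have hcast : (((n - D : ℕ)) : ℝ) = (n : ℝ) - (D : ℝ) := by
    exact Nat.cast_sub hDn
  rw [hcast] at hMge
  -- algebraic identities
  set A : ℝ := (n : ℝ) - (D : ℝ) with hA
  have hA0 : 0 ≤ A := by
    rw [hA]; have : (D:ℝ) ≤ (n:ℝ) := by exact_mod_cast hDn
    linarith
  have hiden : A ^ s + (D : ℝ) * ((s : ℝ) * A ^ (s - 1))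
      = (1 - θ) ^ (s - 1) * (1 + ((s : ℝ) - 1) * θ) * (n : ℝ) ^ s := by
    have h1 : A ^ s = A ^ (s - 1) * A := by
      rw [← pow_succ]; congr 1; omega
    have h2 : A = (1 - θ) * (n : ℝ) := by
      rw [hA, hθ]; field_simp
    have h3 : (D : ℝ) = θ * (n : ℝ) := by
      rw [hθ]; field_simp
    have h4 : (n : ℝ) ^ s = (n : ℝ) ^ (s - 1) * (n : ℝ) := by
      rw [← pow_succ]; congr 1; omega
    rw [h1, h2, h3, h4, mul_pow]
    ring
  have hfinal : (1 - E) ^ 2 * (n : ℝ) ^ s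
      ≤ (n : ℝ) ^ s - (A ^ s + (D : ℝ) * ((s : ℝ) * A ^ (s - 1))) := by
    rw [hiden]
    have hns : (0:ℝ) ≤ (n : ℝ) ^ s := by positivity
    have h6 := mul_le_mul_of_nonneg_right hcore hns
    rw [add_mul, one_mul] at h6
    have h5 : (1 - E) ^ 2 * (n:ℝ)^s ≤ (1 - c) ^ 2 * (n:ℝ)^s :=
      mul_le_mul_of_nonneg_right hsqle hns
    linarith
  linarith
end
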